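/- For a connected d-regular graph G with λ₁(A) < d, the Cheeger constant satisfies h(G) ≥ (d − λ₁(A))/2. -/

import Mathlib

open Matrix Finset
open scoped RealInnerProductSpace

section Aux

variable {V : Type*} [Fintype V] [DecidableEq V] (G : SimpleGraph V) [DecidableRel G.Adj]

lemma eig_const (hconn : G.Connected) (d : ℕ) (hreg : G.IsRegularOfDegree d)
    (u : V → ℝ) (hu : G.adjMatrix ℝ *ᵥ u = (d : ℝ) • u) : ∀ i j, u i = u j := by
  have hL : Matrix.toLin' (G.lapMatrix ℝ) u = 0 := by
    have : G.lapMatrix ℝ *ᵥ u = 0 := by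
      rw [SimpleGraph.lapMatrix, sub_mulVec, hu]
      funext v
      simp [Matrix.mulVec, SimpleGraph.degMatrix, dotProduct, Matrix.diagonal,
        Finset.sum_ite_eq, hreg v]
    simpa [Matrix.toLin'_apply] using this
  intro i j
  exact (G.lapMatrix_mulVec_eq_zero_iff_forall_reachable (x := u)).1 (by simpa [Matrix.toLin'_apply] using hL) i j (hconn i j)

lemma dot_sum_fn (x : V → ℝ) (f : V → V → ℝ) :
    x ⬝ᵥ (∑ i, f i) = ∑ i, x ⬝ᵥ f i := by
  simp only [dotProduct, Finset.sum_apply, Finset.mul_sum]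
  exact Finset.sum_comm

lemma mulVec_sum_fn (A : Matrix V V ℝ) (f : V → V → ℝ) :
    A *ᵥ (∑ i, f i) = ∑ i, A *ᵥ f i := by
  simpa only [Matrix.mulVecLin_apply] using map_sum (Matrix.mulVecLin A) f Finset.univ

lemma rayleigh (hconn : G.Connected) (d : ℕ) (hreg : G.IsRegularOfDegree d)
    (lam1 : ℝ)
    (hlam1 : IsGreatest {lam : ℝ | lam ≠ (d : ℝ) ∧
      ∃ v : V → ℝ, v ≠ 0 ∧ G.adjMatrix ℝ *ᵥ v = lam • v} lam1)
    (x : V → ℝ) (hx0 : ∑ v, x v = 0) :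
    x ⬝ᵥ (G.adjMatrix ℝ *ᵥ x) ≤ lam1 * (x ⬝ᵥ x) := by
  have hA : (G.adjMatrix ℝ).IsHermitian := by
    rw [Matrix.IsHermitian, Matrix.conjTranspose_eq_transpose_of_trivial]
    exact G.isSymm_adjMatrix
  set b := hA.eigenvectorBasis with hb
  set μ := hA.eigenvalues with hμ
  set c : V → ℝ := fun i => inner (𝕜 := ℝ) (b i) (WithLp.toLp 2 x) with hc
  have hxsum : x = ∑ i, c i • ⇑(b i) := by
    have h := congrArg WithLp.ofLp (b.sum_repr' (WithLp.toLp 2 x))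
    simp only [WithLp.ofLp_sum, WithLp.ofLp_smul, WithLp.ofLp_toLp] at h
    exact h.symm
  have hdot : ∀ j, x ⬝ᵥ ⇑(b j) = c j := by
    intro j
    simp only [hc, PiLp.inner_apply, RCLike.inner_apply, starRingEnd_apply, star_trivial]
    simp [dotProduct, mul_comm]
  have hAx : G.adjMatrix ℝ *ᵥ x = ∑ j, (c j * μ j) • ⇑(b j) := by
    conv_lhs => rw [hxsum]
    rw [mulVec_sum_fn]
    refine Finset.sum_congr rfl fun j _ => ?_
    rw [Matrix.mulVec_smul, hA.mulVec_eigenvectorBasis, smul_smul]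
  have h1 : x ⬝ᵥ (G.adjMatrix ℝ *ᵥ x) = ∑ j, μ j * c j ^ 2 := by
    rw [hAx, dot_sum_fn]
    refine Finset.sum_congr rfl fun j _ => ?_
    rw [dotProduct_smul, hdot j]
    simp only [smul_eq_mul]; ring
  have h2 : x ⬝ᵥ x = ∑ j, c j ^ 2 := by
    conv_lhs => rw [show (x ⬝ᵥ x) = x ⬝ᵥ (∑ i, c i • ⇑(b i)) from by rw [← hxsum]]
    rw [dot_sum_fn]
    refine Finset.sum_congr rfl fun j _ => ?_
    rw [dotProduct_smul, hdot j, smul_eq_mul, sq]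
  rw [h1, h2, Finset.mul_sum]
  apply Finset.sum_le_sum
  intro i _
  by_cases hd : μ i = (d : ℝ)
  · have hconst := eig_const G hconn d hreg (⇑(b i))
      (by rw [hA.mulVec_eigenvectorBasis]; exact congrArg (· • ⇑(b i)) (hμ ▸ hd))
    have hci : c i = 0 := by
      simp only [hc, PiLp.inner_apply, RCLike.inner_apply, starRingEnd_apply, star_trivial]
      rw [Finset.sum_congr rfl fun v _ => mul_comm (x v) ((b i) v)]
      calc ∑ v, (b i) v * x v = ∑ v, (b i) i * x v :=
            Finset.sum_congr rfl fun v _ => congrArg (· * x v) (hconst v i)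
        _ = (b i) i * ∑ v, x v := by rw [Finset.mul_sum]
        _ = 0 := by rw [hx0, mul_zero]
    simp [hci]
  · have hle : μ i ≤ lam1 := by
      apply hlam1.2
      refine ⟨hd, ⇑(b i), ?_, hA.mulVec_eigenvectorBasis i⟩
      intro h
      have hn := b.orthonormal.1 i
      rw [show (b i : EuclideanSpace ℝ V) = 0 from by ext k; simpa using congrFun h k] at hn
      simp at hn
    exact mul_le_mul_of_nonneg_right hle (sq_nonneg _)




end Aux

set_option maxHeartbeats 1000000 in
/-- For a connected `d`-regular graph `G` with second-largest adjacency
eigenvalue `λ₁(A) < d`, the Cheeger constant satisfies `h(G) ≥ (d − λ₁(A))/2`, i.e.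
every vertex subset `S` with `|S| ≤ |V|/2` has edge boundary of size at least
`(d − λ₁(A))/2 · |S|`. -/
theorem cheeger_lower_bound
    {V : Type*} [Fintype V] [DecidableEq V] (G : SimpleGraph V) [DecidableRel G.Adj]
    (hconn : G.Connected) (d : ℕ) (hreg : G.IsRegularOfDegree d)
    (lam1 : ℝ)
    -- `λ₁(A)` is the second-largest eigenvalue of `A` (largest besides the trivial one `d`):
    (hlam1 : IsGreatest {lam : ℝ | lam ≠ (d : ℝ) ∧
      ∃ v : V → ℝ, v ≠ 0 ∧ G.adjMatrix ℝ *ᵥ v = lam • v} lam1)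
    (hlt : lam1 < (d : ℝ)) :
    ∀ S : Finset V, S.Nonempty → 2 * S.card ≤ Fintype.card V →
      ((d : ℝ) - lam1) / 2 ≤
        (((S ×ˢ Sᶜ).filter (fun p => G.Adj p.1 p.2)).card : ℝ) / (S.card : ℝ) := by
  intro S hS hS2
  have hVne : Nonempty V := ⟨hS.choose⟩
  set n : ℝ := (Fintype.card V : ℝ) with hn_def
  set s : ℝ := (S.card : ℝ) with hs_def
  have hn : 0 < n := by
    rw [hn_def]; exact_mod_cast Fintype.card_pos
  have hs : 0 < s := by
    rw [hs_def]; exact_mod_cast hS.card_pos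
  have h2s : 2 * s ≤ n := by
    rw [hs_def, hn_def]; exact_mod_cast hS2
  set a : ℝ := s / n with ha_def
  have han : a * n = s := div_mul_cancel₀ s hn.ne'
  set χ : V → ℝ := fun v => if v ∈ S then 1 else 0 with hχ_def
  set x : V → ℝ := fun v => χ v - a with hx_def
  set A : Matrix V V ℝ := G.adjMatrix ℝ with hA_def
  have hχsum : ∑ v, χ v = s := by
    simp [hχ_def, hs_def]
  have hsum0 : ∑ v, x v = 0 := by
    simp only [hx_def, Finset.sum_sub_distrib, hχsum, Finset.sum_const, Finset.card_univ,
      nsmul_eq_mul]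
    rw [← hn_def, mul_comm]
    linarith [han]
  have hrow : ∀ v, ∑ w, A v w = (d : ℝ) := by
    intro v
    simp only [hA_def, SimpleGraph.adjMatrix_apply]
    rw [Finset.sum_boole]
    norm_cast
    rw [← SimpleGraph.neighborFinset_eq_filter, SimpleGraph.card_neighborFinset_eq_degree,
      hreg v]
  have hsymm : ∀ v w, A v w = A w v := by
    intro v w
    simp only [hA_def, SimpleGraph.adjMatrix_apply]
    simp [SimpleGraph.adj_comm]
  have S2 : ∑ v, ∑ w, A v w * χ v = (d : ℝ) * s := by
    calc ∑ v, ∑ w, A v w * χ v = ∑ v, χ v * ∑ w, A v w := by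
          refine Finset.sum_congr rfl fun v _ => ?_
          rw [Finset.mul_sum]
          exact Finset.sum_congr rfl fun w _ => mul_comm _ _
      _ = ∑ v, χ v * d := by
          refine Finset.sum_congr rfl fun v _ => by rw [hrow v]
      _ = (d : ℝ) * s := by rw [← Finset.sum_mul, hχsum, mul_comm]
  have S3 : ∑ v, ∑ w, A v w * χ w = (d : ℝ) * s := by
    rw [Finset.sum_comm]
    calc ∑ w, ∑ v, A v w * χ w = ∑ w, χ w * ∑ v, A w v := by
          refine Finset.sum_congr rfl fun w _ => ?_
          rw [Finset.mul_sum]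
          exact Finset.sum_congr rfl fun v _ => by rw [hsymm v w]; ring
      _ = ∑ w, χ w * d := by
          refine Finset.sum_congr rfl fun w _ => by rw [hrow w]
      _ = (d : ℝ) * s := by rw [← Finset.sum_mul, hχsum, mul_comm]
  have S4 : ∑ v, ∑ w, A v w = (d : ℝ) * n := by
    have : ∀ v : V, ∑ w, A v w = (d : ℝ) := hrow
    simp_rw [this]
    rw [Finset.sum_const, Finset.card_univ, nsmul_eq_mul, ← hn_def, mul_comm]
  set B : ℝ := (((S ×ˢ Sᶜ).filter (fun p => G.Adj p.1 p.2)).card : ℝ) with hB_def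
  have hB : ∑ v, ∑ w, A v w * (χ v * (1 - χ w)) = B := by
    have h1 : ∀ v, (∑ w, A v w * (χ v * (1 - χ w))) =
        if v ∈ S then ∑ w ∈ Sᶜ, A v w else 0 := by
      intro v
      by_cases hv : v ∈ S
      · rw [if_pos hv]
        rw [show (∑ w, A v w * (χ v * (1 - χ w))) = ∑ w, if w ∈ Sᶜ then A v w else 0 from
          Finset.sum_congr rfl fun w _ => by
            by_cases hw : w ∈ S <;> simp [hχ_def, hv, hw, Finset.mem_compl]]
        rw [Finset.sum_ite_mem, Finset.univ_inter]
      · rw [if_neg hv]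
        refine Finset.sum_eq_zero fun w _ => by simp [hχ_def, hv]
    simp_rw [h1]
    rw [Finset.sum_ite_mem, Finset.univ_inter]
    rw [hB_def, Finset.card_filter]
    push_cast
    rw [Finset.sum_product]
    refine Finset.sum_congr rfl fun v _ => Finset.sum_congr rfl fun w _ => ?_
    simp [hA_def, SimpleGraph.adjMatrix_apply]
  have S1 : ∑ v, ∑ w, A v w * (χ v * χ w) = (d : ℝ) * s - B := by
    have h : ∀ v w, A v w * (χ v * χ w) = A v w * χ v - A v w * (χ v * (1 - χ w)) := by
      intro v w; ring
    simp_rw [h, Finset.sum_sub_distrib]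
    rw [S2, hB]
  have key := rayleigh G hconn d hreg lam1 hlam1 x hsum0
  have hxx : x ⬝ᵥ x = s - 2 * a * s + n * a ^ 2 := by
    simp only [dotProduct, hx_def]
    have hterm : ∀ v, (χ v - a) * (χ v - a) = χ v - 2 * a * χ v + a ^ 2 := by
      intro v
      have h : χ v * χ v = χ v := by by_cases hv : v ∈ S <;> simp [hχ_def, hv]
      nlinarith [h]
    simp_rw [hterm]
    rw [Finset.sum_add_distrib, Finset.sum_sub_distrib, ← Finset.mul_sum, hχsum,
      Finset.sum_const, Finset.card_univ, nsmul_eq_mul, ← hn_def]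
  have hxAx : x ⬝ᵥ (A *ᵥ x) =
      ((d : ℝ) * s - B) - a * ((d : ℝ) * s) - a * ((d : ℝ) * s) + a ^ 2 * ((d : ℝ) * n) := by
    calc x ⬝ᵥ (A *ᵥ x) = ∑ v, ∑ w, x v * (A v w * x w) := by
          simp only [dotProduct, Matrix.mulVec]
          exact Finset.sum_congr rfl fun v _ => Finset.mul_sum _ _ _
      _ = ∑ v, ∑ w, (A v w * (χ v * χ w) - a * (A v w * χ v) - a * (A v w * χ w)
            + a ^ 2 * A v w) :=
          Finset.sum_congr rfl fun v _ => Finset.sum_congr rfl fun w _ => by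
            simp only [hx_def]; ring
      _ = (∑ v, ∑ w, A v w * (χ v * χ w)) - a * (∑ v, ∑ w, A v w * χ v)
            - a * (∑ v, ∑ w, A v w * χ w) + a ^ 2 * (∑ v, ∑ w, A v w) := by
          simp only [Finset.sum_add_distrib, Finset.sum_sub_distrib, ← Finset.mul_sum]
      _ = ((d : ℝ) * s - B) - a * ((d : ℝ) * s) - a * ((d : ℝ) * s)
            + a ^ 2 * ((d : ℝ) * n) := by rw [S1, S2, S3, S4]
  rw [hxAx, hxx] at key
  have ha2 : 2 * a ≤ 1 := by
    have h : 2 * a * n ≤ 1 * n := by nlinarith [han, h2s]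
    exact le_of_mul_le_mul_right h hn
  have hd : 0 ≤ (d : ℝ) - lam1 := by linarith
  have e1 : a ^ 2 * ((d : ℝ) * n) = a * ((d : ℝ) * s) := by
    rw [show a ^ 2 * ((d : ℝ) * n) = (a * n) * (a * (d : ℝ)) from by ring, han]; ring
  have e2 : n * a ^ 2 = a * s := by
    rw [show n * a ^ 2 = (a * n) * a from by ring, han]; ring
  rw [le_div_iff₀ hs]
  nlinarith [key, e1, e2, hs, hd, ha2,
    mul_nonneg (mul_nonneg hd (by linarith : (0:ℝ) ≤ 1 - 2 * a)) hs.le]
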